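/- Normalisation of typable expressions: if Γ ⊢ e : t is derivable in λ•→ and t ≠ •^∞, then e reduces in zero or more weak head reduction steps to a (weak head) normal form. -/

import Mathlib

namespace LambdaBullet

/-- Head constructors for pseudo-types. -/
inductive TyHead : Type
  | var (n : ℕ)
  | nat
  | prod
  | arrow
  | bullet

/-- Arity of each pseudo-type constructor. -/
def tyArity : TyHead → Type
  | .var _ => Empty
  | .nat => Empty
  | .prod => Bool
  | .arrow => Bool
  | .bullet => Unit

/-- The polynomial functor whose M-type is the type of pseudo-types. -/
def TyP : PFunctor := ⟨TyHead, tyArity⟩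

/-- Pseudo-types: possibly infinite coinductively generated trees. -/
abbrev PseudoType := TyP.M

/-- Type variable. -/
def tvar (n : ℕ) : PseudoType := PFunctor.M.mk ⟨TyHead.var n, Empty.elim⟩
/-- The type `Nat`. -/
def tnat : PseudoType := PFunctor.M.mk ⟨TyHead.nat, Empty.elim⟩
/-- Product type. -/
def tprod (t s : PseudoType) : PseudoType :=
  PFunctor.M.mk ⟨TyHead.prod, fun b => bif b then s else t⟩
/-- Arrow type. -/
def tarrow (t s : PseudoType) : PseudoType :=
  PFunctor.M.mk ⟨TyHead.arrow, fun b => bif b then s else t⟩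
/-- Delay type `•t`. -/
def tbullet (t : PseudoType) : PseudoType :=
  PFunctor.M.mk ⟨TyHead.bullet, fun _ => t⟩
/-- Iterated delay `•ⁿ t`. -/
def tbulletN (n : ℕ) (t : PseudoType) : PseudoType := tbullet^[n] t

/-- `Child t s` holds iff `s` is an immediate subtree of `t`. -/
def Child (t s : PseudoType) : Prop := ∃ b : TyP.B t.dest.1, t.dest.2 b = s

/-- `Subtree t s` holds iff `s` is a subtree of `t`. -/
def Subtree (t s : PseudoType) : Prop := Relation.ReflTransGen Child t s

/-- A pseudo-type is regular if it has finitely many distinct subtrees. -/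
def Regular (t : PseudoType) : Prop := {s | Subtree t s}.Finite

/-- The root of the tree is a `•`. -/
def headIsBullet (t : PseudoType) : Prop := t.dest.1 = TyHead.bullet

/-- A pseudo-type is guarded if every infinite path in its tree has
infinitely many `•`'s. -/
def Guarded (t : PseudoType) : Prop :=
  ∀ f : ℕ → PseudoType, f 0 = t → (∀ n, Child (f n) (f (n + 1))) →
    ∀ N, ∃ n, N ≤ n ∧ headIsBullet (f n)

/-- A type is a regular and guarded pseudo-type. -/
def IsType (t : PseudoType) : Prop := Regular t ∧ Guarded t

/-- `•^∞`: the unique pseudo-type satisfying `•^∞ = • •^∞`. -/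
def binf : PseudoType := PFunctor.M.corec (fun _ : Unit => ⟨TyHead.bullet, fun _ => ()⟩) ()

/-- Constants. -/
inductive Const : Type
  | pair
  | cfst
  | csnd
  | zero
  | succ

/-- Expressions (with de Bruijn indices for variables). -/
inductive Expr : Type
  | var (x : ℕ)
  | const (k : Const)
  | lam (e : Expr)
  | app (e₁ e₂ : Expr)

def liftRen (f : ℕ → ℕ) : ℕ → ℕ
  | 0 => 0
  | n + 1 => f n + 1

def rename (f : ℕ → ℕ) : Expr → Expr
  | .var n => .var (f n)
  | .const k => .const k
  | .lam e => .lam (rename (liftRen f) e)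
  | .app a b => .app (rename f a) (rename f b)

def liftSub (ρ : ℕ → Expr) : ℕ → Expr
  | 0 => .var 0
  | n + 1 => rename Nat.succ (ρ n)

/-- Simultaneous (capture-avoiding) substitution. -/
def substE (ρ : ℕ → Expr) : Expr → Expr
  | .var n => ρ n
  | .const k => .const k
  | .lam e => .lam (substE (liftSub ρ) e)
  | .app a b => .app (substE ρ a) (substE ρ b)

/-- `subst0 e f` is `e[f/x]` for the topmost variable `x`. -/
def subst0 (e f : Expr) : Expr :=
  substE (fun n => match n with | 0 => f | n + 1 => .var n) e

/-- The pair `⟨e₁, e₂⟩`. -/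
def mkPair (e₁ e₂ : Expr) : Expr := .app (.app (.const .pair) e₁) e₂

/-- Evaluation contexts E ::= [] | E e | fst E | snd E | succ E. -/
inductive ECtx : Type
  | hole
  | app (E : ECtx) (e : Expr)
  | fst (E : ECtx)
  | snd (E : ECtx)
  | succ (E : ECtx)

/-- Plugging an expression into an evaluation context. -/
def ECtx.plug : ECtx → Expr → Expr
  | .hole, e => e
  | .app E f, e => .app (E.plug e) f
  | .fst E, e => .app (.const .cfst) (E.plug e)
  | .snd E, e => .app (.const .csnd) (E.plug e)
  | .succ E, e => .app (.const .succ) (E.plug e)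

/-- Head reduction rules. -/
inductive HeadRed : Expr → Expr → Prop
  | beta (e f) : HeadRed (.app (.lam e) f) (subst0 e f)
  | fst (e₁ e₂) : HeadRed (.app (.const .cfst) (mkPair e₁ e₂)) e₁
  | snd (e₁ e₂) : HeadRed (.app (.const .csnd) (mkPair e₁ e₂)) e₂

/-- Weak head (call-by-name) reduction: head rules closed under evaluation contexts. -/
def Red (a b : Expr) : Prop :=
  ∃ (E : ECtx) (e f : Expr), HeadRed e f ∧ a = E.plug e ∧ b = E.plug f

/-- Many-step reduction. -/
def RedStar : Expr → Expr → Prop := Relation.ReflTransGen Red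

/-- (Weak head) normal forms. -/
def NormalForm (e : Expr) : Prop := ∀ f, ¬ Red e f

/-- Typing contexts: finite maps from (de Bruijn) variables to types. -/
def Ctx : Type := ℕ → Option PseudoType

/-- Extending a typing context with a type for the topmost variable. -/
def Ctx.cons (t : PseudoType) (Γ : Ctx) : Ctx :=
  fun n => match n with | 0 => some t | n + 1 => Γ n

/-- The type assignment κ for constants. -/
inductive KappaTy : Const → PseudoType → Prop
  | pair {t s} : IsType t → IsType s →
      KappaTy .pair (tarrow t (tarrow s (tprod t s)))
  | fst {t s} : IsType t → IsType s →
      KappaTy .cfst (tarrow (tprod t s) t)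
  | snd {t s} : IsType t → IsType s →
      KappaTy .csnd (tarrow (tprod t s) s)
  | zero : KappaTy .zero tnat
  | succ : KappaTy .succ (tarrow tnat tnat)

/-- The type assignment system λ•→. -/
inductive Types : Ctx → Expr → PseudoType → Prop
  | ax {Γ x t} : Γ x = some t → IsType t → Types Γ (.var x) t
  | const {Γ k t} : KappaTy k t → Types Γ (.const k) t
  | bulletI {Γ e t} : Types Γ e t → Types Γ e (tbullet t)
  | arrowI {Γ e n t s} :
      Types (Ctx.cons (tbulletN n t) Γ) e (tbulletN n s) →
      Types Γ (.lam e) (tbulletN n (tarrow t s))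
  | arrowE {Γ e₁ e₂ n t s} :
      Types Γ e₁ (tbulletN n (tarrow t s)) → Types Γ e₂ (tbulletN n t) →
      Types Γ (.app e₁ e₂) (tbulletN n s)

/-! ### Auxiliary development for the normalisation proof -/

section ShapeView

/-- A one-level view of a pseudo-type. -/
inductive Shape : Type
  | isVar (n : ℕ)
  | isNat
  | isProd (A B : PseudoType)
  | isArrow (A B : PseudoType)
  | isBullet (u : PseudoType)

/-- Compute the one-level view of a pseudo-type. -/
def shape (t : PseudoType) : Shape :=
  match t.dest with
  | ⟨.var n, _⟩ => .isVar n
  | ⟨.nat, _⟩ => .isNat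
  | ⟨.prod, ch⟩ => .isProd (ch false) (ch true)
  | ⟨.arrow, ch⟩ => .isArrow (ch false) (ch true)
  | ⟨.bullet, ch⟩ => .isBullet (ch ())

def ofShape : Shape → PseudoType
  | .isVar n => tvar n
  | .isNat => tnat
  | .isProd A B => tprod A B
  | .isArrow A B => tarrow A B
  | .isBullet u => tbullet u

@[simp] lemma shape_tvar (n : ℕ) : shape (tvar n) = .isVar n := rfl
@[simp] lemma shape_tnat : shape tnat = .isNat := rfl
@[simp] lemma shape_tprod (A B : PseudoType) : shape (tprod A B) = .isProd A B := rfl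
@[simp] lemma shape_tarrow (A B : PseudoType) : shape (tarrow A B) = .isArrow A B := rfl
@[simp] lemma shape_tbullet (u : PseudoType) : shape (tbullet u) = .isBullet u := rfl

lemma ofShape_shape (t : PseudoType) : ofShape (shape t) = t := by
  have hmk := PFunctor.M.mk_dest t
  rcases hdest : t.dest with ⟨a, ch⟩
  rw [hdest] at hmk
  unfold shape
  rw [hdest]
  cases a
  case var n =>
    rw [← hmk]
    show tvar _ = _
    unfold tvar
    exact congrArg PFunctor.M.mk (congrArg (Sigma.mk _) (funext fun b => b.elim))
  case nat =>
    rw [← hmk]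
    show tnat = _
    unfold tnat
    exact congrArg PFunctor.M.mk (congrArg (Sigma.mk _) (funext fun b => b.elim))
  case prod =>
    rw [← hmk]
    show tprod _ _ = _
    unfold tprod
    exact congrArg PFunctor.M.mk (congrArg (Sigma.mk _) (funext fun b => by cases b <;> rfl))
  case arrow =>
    rw [← hmk]
    show tarrow _ _ = _
    unfold tarrow
    exact congrArg PFunctor.M.mk (congrArg (Sigma.mk _) (funext fun b => by cases b <;> rfl))
  case bullet =>
    rw [← hmk]
    show tbullet _ = _
    unfold tbullet
    exact congrArg PFunctor.M.mk (congrArg (Sigma.mk _) (funext fun b => by cases b; rfl))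

lemma shape_cases (t : PseudoType) :
    (∃ n, t = tvar n) ∨ t = tnat ∨ (∃ A B, t = tprod A B) ∨
      (∃ A B, t = tarrow A B) ∨ (∃ u, t = tbullet u) := by
  have h := ofShape_shape t
  rcases hs : shape t with n | _ | ⟨A, B⟩ | ⟨A, B⟩ | u <;> rw [hs] at h
  · exact Or.inl ⟨n, h.symm⟩
  · exact Or.inr (Or.inl h.symm)
  · exact Or.inr (Or.inr (Or.inl ⟨A, B, h.symm⟩))
  · exact Or.inr (Or.inr (Or.inr (Or.inl ⟨A, B, h.symm⟩)))
  · exact Or.inr (Or.inr (Or.inr (Or.inr ⟨u, h.symm⟩)))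

lemma tarrow_inj {A B A' B' : PseudoType} (h : tarrow A B = tarrow A' B') :
    A = A' ∧ B = B' := by
  have h' := congrArg shape h
  rw [shape_tarrow, shape_tarrow] at h'
  injection h' with h1 h2
  exact ⟨h1, h2⟩

lemma tprod_inj {A B A' B' : PseudoType} (h : tprod A B = tprod A' B') :
    A = A' ∧ B = B' := by
  have h' := congrArg shape h
  rw [shape_tprod, shape_tprod] at h'
  injection h' with h1 h2
  exact ⟨h1, h2⟩

lemma tbullet_inj {u u' : PseudoType} (h : tbullet u = tbullet u') : u = u' := by
  have h' := congrArg shape h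
  rw [shape_tbullet, shape_tbullet] at h'
  injection h'

@[simp] lemma headIsBullet_tbullet (u : PseudoType) : headIsBullet (tbullet u) := rfl

@[simp] lemma not_headIsBullet_tvar (n : ℕ) : ¬ headIsBullet (tvar n) := by
  intro h; exact TyHead.noConfusion h
@[simp] lemma not_headIsBullet_tnat : ¬ headIsBullet tnat := by
  intro h; exact TyHead.noConfusion h
@[simp] lemma not_headIsBullet_tprod (A B : PseudoType) : ¬ headIsBullet (tprod A B) := by
  intro h; exact TyHead.noConfusion h
@[simp] lemma not_headIsBullet_tarrow (A B : PseudoType) : ¬ headIsBullet (tarrow A B) := by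
  intro h; exact TyHead.noConfusion h

/-! ### Children -/

lemma child_tbullet {u v : PseudoType} (h : Child (tbullet u) v) : v = u := by
  rcases h with ⟨b, hb⟩; exact hb.symm

lemma child_tbullet_self (u : PseudoType) : Child (tbullet u) u := ⟨(), rfl⟩

lemma child_tarrow {A B v : PseudoType} (h : Child (tarrow A B) v) : v = A ∨ v = B := by
  rcases h with ⟨b, hb⟩
  cases b
  · exact Or.inl hb.symm
  · exact Or.inr hb.symm

lemma child_tarrow_left (A B : PseudoType) : Child (tarrow A B) A := ⟨false, rfl⟩
lemma child_tarrow_right (A B : PseudoType) : Child (tarrow A B) B := ⟨true, rfl⟩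

lemma child_tprod {A B v : PseudoType} (h : Child (tprod A B) v) : v = A ∨ v = B := by
  rcases h with ⟨b, hb⟩
  cases b
  · exact Or.inl hb.symm
  · exact Or.inr hb.symm

lemma child_tprod_left (A B : PseudoType) : Child (tprod A B) A := ⟨false, rfl⟩
lemma child_tprod_right (A B : PseudoType) : Child (tprod A B) B := ⟨true, rfl⟩

lemma child_tnat {v : PseudoType} (h : Child tnat v) : False := by
  rcases h with ⟨b, _⟩; exact b.elim

lemma child_tvar {n : ℕ} {v : PseudoType} (h : Child (tvar n) v) : False := by
  rcases h with ⟨b, _⟩; exact b.elim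

end ShapeView
/-! ### Guardedness lemmas -/

section GuardedLemmas

lemma guarded_child {t u : PseudoType} (ht : Guarded t) (hc : Child t u) : Guarded u := by
  intro f hf0 hch N
  set g : ℕ → PseudoType := fun n => Nat.rec t (fun m _ => f m) n with hg
  have hg0 : g 0 = t := rfl
  have hgs : ∀ n, g (n + 1) = f n := fun n => rfl
  have hgch : ∀ n, Child (g n) (g (n + 1)) := by
    intro n
    cases n with
    | zero => rw [hg0, hgs, hf0]; exact hc
    | succ m => rw [hgs, hgs]; exact hch m
  obtain ⟨n, hn, hb⟩ := ht g hg0 hgch (N + 1)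
  rcases Nat.exists_eq_add_of_le hn with ⟨d, hd⟩
  refine ⟨N + d, Nat.le_add_right _ _, ?_⟩
  have : g n = f (N + d) := by rw [hd, Nat.add_assoc, Nat.add_comm 1 d, ← Nat.add_assoc, hgs]
  rwa [this] at hb

lemma guarded_tnat : Guarded tnat := by
  intro f hf0 hch _
  exact absurd (hf0 ▸ hch 0) (fun h => child_tnat h)

lemma guarded_tvar (n : ℕ) : Guarded (tvar n) := by
  intro f hf0 hch _
  exact absurd (hf0 ▸ hch 0) (fun h => child_tvar h)

lemma guarded_tprod {A B : PseudoType} (hA : Guarded A) (hB : Guarded B) :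
    Guarded (tprod A B) := by
  intro f hf0 hch N
  have h1 : f 1 = A ∨ f 1 = B := child_tprod (hf0 ▸ hch 0)
  have tail : ∀ (C : PseudoType), Guarded C → f 1 = C → ∃ n, N ≤ n ∧ headIsBullet (f n) := by
    intro C hC h1C
    obtain ⟨n, hn, hb⟩ := hC (fun m => f (m + 1)) h1C (fun m => hch (m + 1)) N
    exact ⟨n + 1, le_trans hn (Nat.le_succ n), hb⟩
  rcases h1 with h | h
  · exact tail A hA h
  · exact tail B hB h

lemma isType_guarded {t : PseudoType} (h : IsType t) : Guarded t := h.2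

lemma guarded_tbulletN_down {n : ℕ} {t : PseudoType} (h : Guarded (tbulletN n t)) :
    Guarded t := by
  induction n with
  | zero => exact h
  | succ m ih =>
    apply ih
    have : tbulletN (m + 1) t = tbullet (tbulletN m t) := Function.iterate_succ_apply' _ _ _
    rw [this] at h
    exact guarded_child h (child_tbullet_self _)

/-! ### The well-founded relation for the guarded interpretation -/

/-- Recursion relation: step to a child, not increasing the index, and strictly
decreasing the index when the parent starts with `•`; only from guarded parents. -/
def GRel : ℕ × PseudoType → ℕ × PseudoType → Prop :=
  fun q p => Guarded p.2 ∧ Child p.2 q.2 ∧ q.1 ≤ p.1 ∧ (headIsBullet p.2 → q.1 < p.1)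

lemma nat_antitone_stab (k : ℕ → ℕ) (h : ∀ n, k (n + 1) ≤ k n) :
    ∃ N, ∀ n, N ≤ n → k n = k N := by
  have hmono : ∀ m n, m ≤ n → k n ≤ k m := by
    intro m n hmn
    induction hmn with
    | refl => exact le_refl _
    | step _ ih => exact le_trans (h _) ih
  have hne : (Set.range k).Nonempty := ⟨k 0, 0, rfl⟩
  obtain ⟨N, hN⟩ := Nat.sInf_mem hne
  refine ⟨N, fun n hn => le_antisymm (hmono N n hn) ?_⟩
  rw [hN]
  exact Nat.sInf_le ⟨n, rfl⟩

theorem grel_wf : WellFounded GRel := by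
  constructor
  intro p
  by_contra hp
  have step : ∀ q : ℕ × PseudoType, ¬ Acc GRel q → ∃ r, GRel r q ∧ ¬ Acc GRel r := by
    intro q hq
    by_contra hcon
    push_neg at hcon
    exact hq (Acc.intro q fun r hr => hcon r hr)
  choose nxt hGR hA using step
  let f : ℕ → {q : ℕ × PseudoType // ¬ Acc GRel q} :=
    fun n => Nat.rec ⟨p, hp⟩ (fun _ prev => ⟨nxt prev.1 prev.2, hA _ _⟩) n
  have hstep : ∀ n, GRel (f (n + 1)).1 (f n).1 := fun n => hGR _ _
  -- the index sequence is antitone, so it stabilises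
  obtain ⟨N, hN⟩ := nat_antitone_stab (fun n => (f n).1.1) (fun n => (hstep n).2.2.1)
  -- from N on, no head is a bullet
  have hnb : ∀ n, N ≤ n → ¬ headIsBullet (f n).1.2 := by
    intro n hn hb
    have h1 := (hstep n).2.2.2 hb
    have e1 : (f (n + 1)).1.1 = (f N).1.1 := hN _ (le_trans hn (Nat.le_succ n))
    have e2 : (f n).1.1 = (f N).1.1 := hN _ hn
    omega
  -- but the tail path violates guardedness of (f N).1.2
  have hguard : Guarded (f N).1.2 := (hstep N).1
  obtain ⟨n, hn, hb⟩ := hguard (fun m => (f (N + m)).1.2) rfl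
    (fun m => (hstep (N + m)).2.1) 0
  exact hnb (N + n) (Nat.le_add_right _ _) hb

end GuardedLemmas
/-! ### Reduction infrastructure -/

section RedInfra

def ECtx.comp : ECtx → ECtx → ECtx
  | .hole, F => F
  | .app E e, F => .app (E.comp F) e
  | .fst E, F => .fst (E.comp F)
  | .snd E, F => .snd (E.comp F)
  | .succ E, F => .succ (E.comp F)

lemma ECtx.plug_comp (E F : ECtx) (e : Expr) : (E.comp F).plug e = E.plug (F.plug e) := by
  induction E <;> simp [ECtx.comp, ECtx.plug, *]

lemma red_plug {a b : Expr} (E : ECtx) (h : Red a b) : Red (E.plug a) (E.plug b) := by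
  obtain ⟨F, x, y, hr, ha, hb⟩ := h
  exact ⟨E.comp F, x, y, hr, by rw [ha, ECtx.plug_comp], by rw [hb, ECtx.plug_comp]⟩

lemma redstar_plug {a b : Expr} (E : ECtx) (h : RedStar a b) :
    RedStar (E.plug a) (E.plug b) :=
  Relation.ReflTransGen.lift E.plug (fun _ _ h => red_plug E h) _ _ h

lemma red_app_left {a b : Expr} (c : Expr) (h : Red a b) : Red (.app a c) (.app b c) :=
  red_plug (.app .hole c) h

lemma red_fst_arg {a b : Expr} (h : Red a b) :
    Red (.app (.const .cfst) a) (.app (.const .cfst) b) := red_plug (.fst .hole) h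

lemma red_snd_arg {a b : Expr} (h : Red a b) :
    Red (.app (.const .csnd) a) (.app (.const .csnd) b) := red_plug (.snd .hole) h

lemma redstar_succ_arg {a b : Expr} (h : RedStar a b) :
    RedStar (.app (.const .succ) a) (.app (.const .succ) b) := redstar_plug (.succ .hole) h

/-- Weak head normalisation. -/
def WN (e : Expr) : Prop := ∃ f, RedStar e f ∧ NormalForm f

lemma wn_of_nf {e : Expr} (h : NormalForm e) : WN e := ⟨e, Relation.ReflTransGen.refl, h⟩

lemma wn_expand {e e' : Expr} (h : Red e e') (hw : WN e') : WN e := by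
  obtain ⟨f, hf, hnf⟩ := hw
  exact ⟨f, Relation.ReflTransGen.head h hf, hnf⟩

/-! ### Normal forms -/

lemma plug_const_no_red {E : ECtx} {x y : Expr} {k : Const}
    (h : E.plug x = .const k) (hr : HeadRed x y) : False := by
  cases E <;> simp [ECtx.plug] at h
  subst h; cases hr

lemma nf_lam (e : Expr) : NormalForm (.lam e) := by
  rintro f ⟨E, x, y, hr, hEx, -⟩
  cases E <;> simp [ECtx.plug] at hEx
  subst hEx; cases hr

lemma nf_const (k : Const) : NormalForm (.const k) := by
  rintro f ⟨E, x, y, hr, hEx, -⟩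
  cases E <;> simp [ECtx.plug] at hEx
  subst hEx; cases hr

/-- Stuck expressions: spines that can never produce a weak head redex. -/
inductive Stuck : Expr → Prop
  | var (x : ℕ) : Stuck (.var x)
  | zero : Stuck (.const .zero)
  | app {e : Expr} (a : Expr) : Stuck e → Stuck (.app e a)
  | fstApp {e : Expr} : Stuck e → Stuck (.app (.const .cfst) e)
  | sndApp {e : Expr} : Stuck e → Stuck (.app (.const .csnd) e)

lemma stuck_not_mkPair (a b : Expr) (h : Stuck (mkPair a b)) : False := by
  rw [mkPair] at h
  cases h with
  | app _ h' =>
    cases h' with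
    | app _ h'' => cases h''

lemma stuck_nf {e : Expr} (hs : Stuck e) : NormalForm e := by
  induction hs with
  | var x =>
    rintro f ⟨E, x', y, hr, hEx, -⟩
    cases E <;> simp [ECtx.plug] at hEx
    subst hEx; cases hr
  | zero => exact nf_const .zero
  | app a hs ih =>
    rintro f ⟨E, x, y, hr, hEx, -⟩
    cases E with
    | hole =>
      simp [ECtx.plug] at hEx
      subst hEx
      cases hr with
      | beta e₁ f₁ => cases hs
      | fst e₁ e₂ => cases hs
      | snd e₁ e₂ => cases hs
    | app E' c =>
      simp [ECtx.plug] at hEx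
      obtain ⟨h1, -⟩ := hEx
      exact ih _ ⟨E', x, y, hr, h1, rfl⟩
    | fst E' =>
      simp [ECtx.plug] at hEx
      obtain ⟨h1, -⟩ := hEx
      rw [h1] at hs; cases hs
    | snd E' =>
      simp [ECtx.plug] at hEx
      obtain ⟨h1, -⟩ := hEx
      rw [h1] at hs; cases hs
    | succ E' =>
      simp [ECtx.plug] at hEx
      obtain ⟨h1, -⟩ := hEx
      rw [h1] at hs; cases hs
  | fstApp hs ih =>
    rintro f ⟨E, x, y, hr, hEx, -⟩
    cases E with
    | hole =>
      simp [ECtx.plug] at hEx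
      subst hEx
      cases hr with
      | fst e₁ e₂ => exact stuck_not_mkPair _ _ hs
    | app E' c =>
      simp [ECtx.plug] at hEx
      obtain ⟨h1, -⟩ := hEx
      first
      | exact plug_const_no_red h1 hr
      | exact plug_const_no_red h1.symm hr
    | fst E' =>
      simp [ECtx.plug] at hEx
      first
      | exact ih _ ⟨E', x, y, hr, hEx, rfl⟩
      | exact ih _ ⟨E', x, y, hr, hEx.symm, rfl⟩
    | snd E' => simp [ECtx.plug] at hEx
    | succ E' => simp [ECtx.plug] at hEx
  | sndApp hs ih =>
    rintro f ⟨E, x, y, hr, hEx, -⟩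
    cases E with
    | hole =>
      simp [ECtx.plug] at hEx
      subst hEx
      cases hr with
      | snd e₁ e₂ => exact stuck_not_mkPair _ _ hs
    | app E' c =>
      simp [ECtx.plug] at hEx
      obtain ⟨h1, -⟩ := hEx
      first
      | exact plug_const_no_red h1 hr
      | exact plug_const_no_red h1.symm hr
    | snd E' =>
      simp [ECtx.plug] at hEx
      first
      | exact ih _ ⟨E', x, y, hr, hEx, rfl⟩
      | exact ih _ ⟨E', x, y, hr, hEx.symm, rfl⟩
    | fst E' => simp [ECtx.plug] at hEx
    | succ E' => simp [ECtx.plug] at hEx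

lemma nf_mkPair (a b : Expr) : NormalForm (mkPair a b) := by
  rintro f ⟨E, x, y, hr, hEx, -⟩
  rw [mkPair] at hEx
  cases E with
  | hole =>
    simp [ECtx.plug] at hEx
    subst hEx; cases hr
  | app E' c =>
    simp [ECtx.plug] at hEx
    obtain ⟨h1, -⟩ := hEx
    cases E' with
    | hole =>
      simp [ECtx.plug] at h1
      subst h1; cases hr
    | app E'' c' =>
      simp [ECtx.plug] at h1
      exact plug_const_no_red h1.1.symm hr
    | fst E'' => simp [ECtx.plug] at h1
    | snd E'' => simp [ECtx.plug] at h1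
    | succ E'' => simp [ECtx.plug] at h1
  | fst E' => simp [ECtx.plug] at hEx
  | snd E' => simp [ECtx.plug] at hEx
  | succ E' => simp [ECtx.plug] at hEx

lemma nf_app_pair (a : Expr) : NormalForm (.app (.const .pair) a) := by
  rintro f ⟨E, x, y, hr, hEx, -⟩
  cases E with
  | hole =>
    simp [ECtx.plug] at hEx
    subst hEx; cases hr
  | app E' c =>
    simp [ECtx.plug] at hEx
    obtain ⟨h1, -⟩ := hEx
    first
    | exact plug_const_no_red h1 hr
    | exact plug_const_no_red h1.symm hr
  | fst E' => simp [ECtx.plug] at hEx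
  | snd E' => simp [ECtx.plug] at hEx
  | succ E' => simp [ECtx.plug] at hEx

lemma nf_succ_arg {a : Expr} (ha : NormalForm a) : NormalForm (.app (.const .succ) a) := by
  rintro f ⟨E, x, y, hr, hEx, -⟩
  cases E with
  | hole =>
    simp [ECtx.plug] at hEx
    subst hEx; cases hr
  | app E' c =>
    simp [ECtx.plug] at hEx
    obtain ⟨h1, -⟩ := hEx
    first
    | exact plug_const_no_red h1 hr
    | exact plug_const_no_red h1.symm hr
  | fst E' => simp [ECtx.plug] at hEx
  | snd E' => simp [ECtx.plug] at hEx
  | succ E' =>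
    simp [ECtx.plug] at hEx
    first
    | exact ha _ ⟨E', x, y, hr, hEx, rfl⟩
    | exact ha _ ⟨E', x, y, hr, hEx.symm, rfl⟩

end RedInfra
/-! ### Substitution lemmas -/

section SubstLemmas

lemma rename_congr {f g : ℕ → ℕ} (h : ∀ n, f n = g n) (e : Expr) :
    rename f e = rename g e := by
  induction e generalizing f g with
  | var n => simp [rename, h n]
  | const k => rfl
  | lam e ih =>
    simp only [rename]
    rw [ih (g := liftRen g) (fun n => by cases n <;> simp [liftRen, h _])]
  | app a b iha ihb => simp only [rename]; rw [iha h, ihb h]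

lemma rename_rename (f g : ℕ → ℕ) (e : Expr) :
    rename f (rename g e) = rename (fun n => f (g n)) e := by
  induction e generalizing f g with
  | var n => rfl
  | const k => rfl
  | lam e ih =>
    simp only [rename]
    rw [ih]
    congr 1
    exact rename_congr (fun n => by cases n <;> simp [liftRen]) e
  | app a b iha ihb => simp only [rename]; rw [iha, ihb]

lemma substE_congr {ρ ρ' : ℕ → Expr} (h : ∀ n, ρ n = ρ' n) (e : Expr) :
    substE ρ e = substE ρ' e := by
  induction e generalizing ρ ρ' with
  | var n => exact h n
  | const k => rfl
  | lam e ih =>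
    simp only [substE]
    rw [ih (ρ' := liftSub ρ') (fun n => by cases n <;> simp [liftSub, h _])]
  | app a b iha ihb => simp only [substE]; rw [iha h, ihb h]

lemma substE_rename (σ : ℕ → Expr) (f : ℕ → ℕ) (e : Expr) :
    substE σ (rename f e) = substE (fun n => σ (f n)) e := by
  induction e generalizing σ f with
  | var n => rfl
  | const k => rfl
  | lam e ih =>
    simp only [rename, substE]
    rw [ih]
    congr 1
    exact substE_congr (fun n => by cases n <;> simp [liftSub, liftRen]) e
  | app a b iha ihb => simp only [rename, substE]; rw [iha, ihb]

lemma rename_substE (f : ℕ → ℕ) (σ : ℕ → Expr) (e : Expr) :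
    rename f (substE σ e) = substE (fun n => rename f (σ n)) e := by
  induction e generalizing σ f with
  | var n => rfl
  | const k => rfl
  | lam e ih =>
    simp only [rename, substE]
    rw [ih]
    congr 1
    refine substE_congr (fun n => ?_) e
    cases n with
    | zero => rfl
    | succ m =>
      show rename (liftRen f) (rename Nat.succ (σ m)) = rename Nat.succ (rename f (σ m))
      rw [rename_rename, rename_rename]
      exact rename_congr (fun n => rfl) _
  | app a b iha ihb => simp only [rename, substE]; rw [iha, ihb]

lemma substE_substE (σ ρ : ℕ → Expr) (e : Expr) :
    substE σ (substE ρ e) = substE (fun n => substE σ (ρ n)) e := by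
  induction e generalizing σ ρ with
  | var n => rfl
  | const k => rfl
  | lam e ih =>
    simp only [substE]
    rw [ih]
    congr 1
    refine substE_congr (fun n => ?_) e
    cases n with
    | zero => rfl
    | succ m =>
      show substE (liftSub σ) (rename Nat.succ (ρ m)) = rename Nat.succ (substE σ (ρ m))
      rw [substE_rename, rename_substE]
      exact substE_congr (fun n => rfl) _
  | app a b iha ihb => simp only [substE]; rw [iha, ihb]

lemma substE_var (e : Expr) : substE (fun n => .var n) e = e := by
  induction e with
  | var n => rfl
  | const k => rfl
  | lam e ih =>
    simp only [substE]
    rw [substE_congr (ρ' := fun n => .var n) (fun n => by cases n <;> simp [liftSub, rename]) e, ih]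
  | app a b iha ihb => simp only [substE]; rw [iha, ihb]

/-- The cons of an expression onto a substitution. -/
def consSub (a : Expr) (ρ : ℕ → Expr) : ℕ → Expr
  | 0 => a
  | n + 1 => ρ n

lemma subst0_substE (ρ : ℕ → Expr) (e a : Expr) :
    subst0 (substE (liftSub ρ) e) a = substE (consSub a ρ) e := by
  unfold subst0
  rw [substE_substE]
  refine substE_congr (fun n => ?_) e
  cases n with
  | zero => rfl
  | succ m =>
    show substE _ (rename Nat.succ (ρ m)) = ρ m
    rw [substE_rename]
    exact substE_var (ρ m)

end SubstLemmas
/-! ### The interpretation of guarded types -/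

section GuardedInterp

attribute [local instance] Classical.propDecidable

/-- Body of the well-founded recursion defining the interpretation of guarded
types. -/
def IGuardF : (p : ℕ × PseudoType) → (∀ q, GRel q p → Expr → Prop) → Expr → Prop :=
  fun p IH e =>
    if hk : p.1 = 0 then True
    else if hg : Guarded p.2 then
      match hs : shape p.2 with
      | .isVar _ => WN e
      | .isNat => WN e
      | .isBullet u =>
          IH (p.1 - 1, u)
            (by
              have hp : p.2 = tbullet u := by rw [← ofShape_shape p.2, hs]; rfl
              refine ⟨hg, ?_, Nat.sub_le _ _, fun _ => Nat.sub_lt (Nat.pos_of_ne_zero hk) one_pos⟩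
              rw [hp]; exact child_tbullet_self u) e
      | .isProd A B =>
          WN e ∧
          IH (p.1, A)
            (by
              have hp : p.2 = tprod A B := by rw [← ofShape_shape p.2, hs]; rfl
              refine ⟨hg, ?_, le_refl _, fun hb => ?_⟩
              · rw [hp]; exact child_tprod_left A B
              · rw [hp] at hb; exact absurd hb (not_headIsBullet_tprod A B))
            (.app (.const .cfst) e) ∧
          IH (p.1, B)
            (by
              have hp : p.2 = tprod A B := by rw [← ofShape_shape p.2, hs]; rfl
              refine ⟨hg, ?_, le_refl _, fun hb => ?_⟩
              · rw [hp]; exact child_tprod_right A B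
              · rw [hp] at hb; exact absurd hb (not_headIsBullet_tprod A B))
            (.app (.const .csnd) e)
      | .isArrow A B =>
          WN e ∧ ∀ j, ∀ hj : j ≤ p.1, ∀ a,
            IH (j, A)
              (by
                have hp : p.2 = tarrow A B := by rw [← ofShape_shape p.2, hs]; rfl
                refine ⟨hg, ?_, hj, fun hb => ?_⟩
                · rw [hp]; exact child_tarrow_left A B
                · rw [hp] at hb; exact absurd hb (not_headIsBullet_tarrow A B)) a →
            IH (j, B)
              (by
                have hp : p.2 = tarrow A B := by rw [← ofShape_shape p.2, hs]; rfl
                refine ⟨hg, ?_, hj, fun hb => ?_⟩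
                · rw [hp]; exact child_tarrow_right A B
                · rw [hp] at hb; exact absurd hb (not_headIsBullet_tarrow A B))
              (.app e a)
    else False

def IGuardP : ℕ × PseudoType → Expr → Prop := WellFounded.fix grel_wf IGuardF

/-- The interpretation of a (guarded) type. -/
def IGuard (k : ℕ) (t : PseudoType) : Expr → Prop := IGuardP (k, t)

lemma IGuardP_eq (p : ℕ × PseudoType) :
    IGuardP p = IGuardF p (fun q _ => IGuardP q) :=
  WellFounded.fix_eq grel_wf IGuardF p

lemma iguard_zero (t : PseudoType) (e : Expr) : IGuard 0 t e := by
  show IGuardP (0, t) e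
  rw [IGuardP_eq]
  simp only [IGuardF]
  exact trivial

lemma iguard_var {k : ℕ} (hk : k ≠ 0) {n : ℕ} (e : Expr) :
    IGuard k (tvar n) e ↔ WN e := by
  show IGuardP (k, tvar n) e ↔ _
  rw [IGuardP_eq]
  simp only [IGuardF]
  rw [dif_neg hk, dif_pos (guarded_tvar n)]
  exact Iff.rfl

lemma iguard_nat {k : ℕ} (hk : k ≠ 0) (e : Expr) :
    IGuard k tnat e ↔ WN e := by
  show IGuardP (k, tnat) e ↔ _
  rw [IGuardP_eq]
  simp only [IGuardF]
  rw [dif_neg hk, dif_pos guarded_tnat]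
  exact Iff.rfl

lemma iguard_bullet {k : ℕ} {u : PseudoType} (hg : Guarded (tbullet u)) (e : Expr) :
    IGuard (k + 1) (tbullet u) e ↔ IGuard k u e := by
  show IGuardP (k + 1, tbullet u) e ↔ _
  rw [IGuardP_eq]
  simp only [IGuardF]
  rw [dif_neg (Nat.succ_ne_zero k), dif_pos hg]
  exact Iff.rfl

lemma iguard_prod {k : ℕ} (hk : k ≠ 0) {A B : PseudoType} (hg : Guarded (tprod A B)) (e : Expr) :
    IGuard k (tprod A B) e ↔
      (WN e ∧ IGuard k A (.app (.const .cfst) e) ∧ IGuard k B (.app (.const .csnd) e)) := by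
  show IGuardP (k, tprod A B) e ↔ _
  rw [IGuardP_eq]
  simp only [IGuardF]
  rw [dif_neg hk, dif_pos hg]
  exact Iff.rfl

lemma iguard_arrow {k : ℕ} (hk : k ≠ 0) {A B : PseudoType} (hg : Guarded (tarrow A B)) (e : Expr) :
    IGuard k (tarrow A B) e ↔
      (WN e ∧ ∀ j, j ≤ k → ∀ a, IGuard j A a → IGuard j B (.app e a)) := by
  show IGuardP (k, tarrow A B) e ↔ _
  rw [IGuardP_eq]
  simp only [IGuardF]
  rw [dif_neg hk, dif_pos hg]
  exact Iff.rfl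

end GuardedInterp
/-! ### The interpretation of arbitrary pseudo-types -/

section TotalInterp

/-- The interpretation of arbitrary pseudo-types, as an inductive (least
fixed point) definition.  Domains of arrows are interpreted via `IGuard`,
conditionally on guardedness (variables of unguarded types can never be
used, by the `IsType` side condition of the axiom rule). -/
inductive ITot : ℕ → PseudoType → Expr → Prop where
  | zero (t : PseudoType) (e : Expr) : ITot 0 t e
  | base {k : ℕ} {t : PseudoType} {e : Expr}
      (h : t = tnat ∨ ∃ n, t = tvar n) (hw : WN e) : ITot (k + 1) t e
  | bullet {k : ℕ} {u t : PseudoType} {e : Expr}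
      (h : t = tbullet u) (hu : ITot k u e) : ITot (k + 1) t e
  | prod {k : ℕ} {A B t : PseudoType} {e : Expr}
      (h : t = tprod A B) (hw : WN e)
      (h1 : ITot (k + 1) A (.app (.const .cfst) e))
      (h2 : ITot (k + 1) B (.app (.const .csnd) e)) : ITot (k + 1) t e
  | arrow {k : ℕ} {A B t : PseudoType} {e : Expr}
      (h : t = tarrow A B) (hw : WN e)
      (hap : ∀ j, j ≤ k + 1 → ∀ a, (Guarded A → IGuard j A a) → ITot j B (.app e a)) :
      ITot (k + 1) t e

/-- Inversion for `ITot` at an arrow type. -/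
lemma itot_arrow_inv {k : ℕ} {A B : PseudoType} {e : Expr}
    (h : ITot (k + 1) (tarrow A B) e) :
    WN e ∧ ∀ j, j ≤ k + 1 → ∀ a, (Guarded A → IGuard j A a) → ITot j B (.app e a) := by
  cases h with
  | base h hw =>
    rcases h with h | ⟨n, h⟩ <;> (have := congrArg shape h; simp at this)
  | bullet h hu => have := congrArg shape h; simp at this
  | prod h hw h1 h2 => have := congrArg shape h; simp at this
  | arrow h hw hap =>
    obtain ⟨h1, h2⟩ := tarrow_inj h.symm
    subst h1; subst h2
    exact ⟨hw, hap⟩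

/-- Inversion for `ITot` at a product type. -/
lemma itot_prod_inv {k : ℕ} {A B : PseudoType} {e : Expr}
    (h : ITot (k + 1) (tprod A B) e) :
    WN e ∧ ITot (k + 1) A (.app (.const .cfst) e) ∧ ITot (k + 1) B (.app (.const .csnd) e) := by
  cases h with
  | base h hw =>
    rcases h with h | ⟨n, h⟩ <;> (have := congrArg shape h; simp at this)
  | bullet h hu => have := congrArg shape h; simp at this
  | arrow h hw hap => have := congrArg shape h; simp at this
  | prod h hw h1 h2 =>
    obtain ⟨hA, hB⟩ := tprod_inj h.symm
    subst hA; subst hB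
    exact ⟨hw, h1, h2⟩

/-- Inversion for `ITot` at a bullet type. -/
lemma itot_bullet_inv {k : ℕ} {u : PseudoType} {e : Expr}
    (h : ITot (k + 1) (tbullet u) e) : ITot k u e := by
  cases h with
  | base h hw =>
    rcases h with h | ⟨n, h⟩ <;> (have := congrArg shape h; simp at this)
  | prod h hw h1 h2 => have := congrArg shape h; simp at this
  | arrow h hw hap => have := congrArg shape h; simp at this
  | bullet h hu =>
    have := tbullet_inj h.symm
    subst this
    exact hu

/-- At a positive level, members of the interpretation of a type whose head
is not a bullet are weakly normalising. -/
lemma itot_wn {k : ℕ} {t : PseudoType} {e : Expr}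
    (hnb : ¬ headIsBullet t) (h : ITot (k + 1) t e) : WN e := by
  cases h with
  | base h hw => exact hw
  | prod h hw h1 h2 => exact hw
  | arrow h hw hap => exact hw
  | bullet h hu => rw [h] at hnb; exact absurd (headIsBullet_tbullet _) hnb

/-- Antitonicity of the interpretation. -/
lemma itot_antitone {k : ℕ} {t : PseudoType} {e : Expr}
    (h : ITot k t e) : ∀ j, j ≤ k → ITot j t e := by
  induction h with
  | zero t e =>
    intro j hj
    rw [Nat.le_zero.mp hj]
    exact ITot.zero t e
  | base h hw =>
    intro j hj
    cases j with
    | zero => exact ITot.zero _ _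
    | succ j' => exact ITot.base h hw
  | bullet h hu ih =>
    intro j hj
    cases j with
    | zero => exact ITot.zero _ _
    | succ j' => exact ITot.bullet h (ih j' (Nat.succ_le_succ_iff.mp hj))
  | prod h hw h1 h2 ih1 ih2 =>
    intro j hj
    cases j with
    | zero => exact ITot.zero _ _
    | succ j' => exact ITot.prod h hw (ih1 _ hj) (ih2 _ hj)
  | arrow h hw hap ih =>
    intro j hj
    cases j with
    | zero => exact ITot.zero _ _
    | succ j' =>
      exact ITot.arrow h hw (fun i hi a ha => hap i (le_trans hi hj) a ha)

/-- The interpretation is closed under weak head expansion. -/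
lemma itot_expand {k : ℕ} {t : PseudoType} {e e' : Expr}
    (hred : Red e e') (h : ITot k t e') : ITot k t e := by
  induction h generalizing e with
  | zero t _ => exact ITot.zero t e
  | base h hw => exact ITot.base h (wn_expand hred hw)
  | bullet h hu ih => exact ITot.bullet h (ih hred)
  | prod h hw h1 h2 ih1 ih2 =>
    exact ITot.prod h (wn_expand hred hw) (ih1 (red_fst_arg hred)) (ih2 (red_snd_arg hred))
  | arrow h hw hap ih =>
    exact ITot.arrow h (wn_expand hred hw)
      (fun j hj a ha => ih j hj a ha (red_app_left a hred))

/-! ### Transfer between `ITot` and `IGuard` on guarded types -/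

lemma itot_to_iguard {k : ℕ} {t : PseudoType} {e : Expr}
    (h : ITot k t e) (hg : Guarded t) : IGuard k t e := by
  induction h with
  | zero t e => exact iguard_zero t e
  | base h hw =>
    rcases h with h | ⟨n, h⟩
    · subst h; exact (iguard_nat (Nat.succ_ne_zero _) _).mpr hw
    · subst h; exact (iguard_var (Nat.succ_ne_zero _) _).mpr hw
  | bullet h hu ih =>
    subst h
    exact (iguard_bullet hg _).mpr (ih (guarded_child hg (child_tbullet_self _)))
  | prod h hw h1 h2 ih1 ih2 =>
    subst h
    exact (iguard_prod (Nat.succ_ne_zero _) hg _).mpr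
      ⟨hw, ih1 (guarded_child hg (child_tprod_left _ _)),
        ih2 (guarded_child hg (child_tprod_right _ _))⟩
  | arrow h hw hap ih =>
    subst h
    have hA : Guarded _ := guarded_child hg (child_tarrow_left _ _)
    have hB : Guarded _ := guarded_child hg (child_tarrow_right _ _)
    refine (iguard_arrow (Nat.succ_ne_zero _) hg _).mpr ⟨hw, fun j hj a ha => ?_⟩
    exact ih j hj a (fun _ => ha) hB

lemma iguard_to_itot : ∀ p : ℕ × PseudoType, Guarded p.2 →
    ∀ e, IGuard p.1 p.2 e → ITot p.1 p.2 e := by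
  intro p
  induction p using WellFounded.induction grel_wf with
  | _ p IH =>
  obtain ⟨k, t⟩ := p
  intro hg e hig
  cases k with
  | zero => exact ITot.zero t e
  | succ k' =>
    rcases shape_cases t with ⟨n, rfl⟩ | rfl | ⟨A, B, rfl⟩ | ⟨A, B, rfl⟩ | ⟨u, rfl⟩
    · exact ITot.base (Or.inr ⟨n, rfl⟩) ((iguard_var (Nat.succ_ne_zero _) _).mp hig)
    · exact ITot.base (Or.inl rfl) ((iguard_nat (Nat.succ_ne_zero _) _).mp hig)
    · have hA : Guarded A := guarded_child hg (child_tprod_left _ _)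
      have hB : Guarded B := guarded_child hg (child_tprod_right _ _)
      obtain ⟨hw, h1, h2⟩ := (iguard_prod (Nat.succ_ne_zero _) hg e).mp hig
      refine ITot.prod rfl hw ?_ ?_
      · exact IH (k' + 1, A)
          ⟨hg, child_tprod_left _ _, le_refl _,
            fun hb => absurd hb (not_headIsBullet_tprod _ _)⟩ hA _ h1
      · exact IH (k' + 1, B)
          ⟨hg, child_tprod_right _ _, le_refl _,
            fun hb => absurd hb (not_headIsBullet_tprod _ _)⟩ hB _ h2
    · have hA : Guarded A := guarded_child hg (child_tarrow_left _ _)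
      have hB : Guarded B := guarded_child hg (child_tarrow_right _ _)
      obtain ⟨hw, hap⟩ := (iguard_arrow (Nat.succ_ne_zero _) hg e).mp hig
      refine ITot.arrow rfl hw (fun j hj a ha => ?_)
      refine IH (j, B)
        ⟨hg, child_tarrow_right _ _, hj, fun hb => absurd hb (not_headIsBullet_tarrow _ _)⟩
        hB _ (hap j hj a (ha hA))
    · have hu : Guarded u := guarded_child hg (child_tbullet_self _)
      exact ITot.bullet rfl
        (IH (k', u) ⟨hg, child_tbullet_self _, Nat.le_succ _, fun _ => Nat.lt_succ_self _⟩
          hu _ ((iguard_bullet hg e).mp hig))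

/-! ### Stuck terms inhabit every guarded type -/

lemma stuck_itot : ∀ p : ℕ × PseudoType, Guarded p.2 →
    ∀ e, Stuck e → ITot p.1 p.2 e := by
  intro p
  induction p using WellFounded.induction grel_wf with
  | _ p IH =>
  obtain ⟨k, t⟩ := p
  intro hg e hs
  cases k with
  | zero => exact ITot.zero t e
  | succ k' =>
    rcases shape_cases t with ⟨n, rfl⟩ | rfl | ⟨A, B, rfl⟩ | ⟨A, B, rfl⟩ | ⟨u, rfl⟩
    · exact ITot.base (Or.inr ⟨n, rfl⟩) (wn_of_nf (stuck_nf hs))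
    · exact ITot.base (Or.inl rfl) (wn_of_nf (stuck_nf hs))
    · have hA : Guarded A := guarded_child hg (child_tprod_left _ _)
      have hB : Guarded B := guarded_child hg (child_tprod_right _ _)
      refine ITot.prod rfl (wn_of_nf (stuck_nf hs)) ?_ ?_
      · exact IH (k' + 1, A)
          ⟨hg, child_tprod_left _ _, le_refl _,
            fun hb => absurd hb (not_headIsBullet_tprod _ _)⟩ hA _ (Stuck.fstApp hs)
      · exact IH (k' + 1, B)
          ⟨hg, child_tprod_right _ _, le_refl _,
            fun hb => absurd hb (not_headIsBullet_tprod _ _)⟩ hB _ (Stuck.sndApp hs)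
    · have hB : Guarded B := guarded_child hg (child_tarrow_right _ _)
      refine ITot.arrow rfl (wn_of_nf (stuck_nf hs)) (fun j hj a _ => ?_)
      exact IH (j, B)
        ⟨hg, child_tarrow_right _ _, hj, fun hb => absurd hb (not_headIsBullet_tarrow _ _)⟩
        hB _ (Stuck.app a hs)
    · have hu : Guarded u := guarded_child hg (child_tbullet_self _)
      exact ITot.bullet rfl
        (IH (k', u) ⟨hg, child_tbullet_self _, Nat.le_succ _, fun _ => Nat.lt_succ_self _⟩
          hu _ hs)

/-! ### Peeling bullets -/

lemma tbulletN_succ (n : ℕ) (t : PseudoType) :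
    tbulletN (n + 1) t = tbullet (tbulletN n t) := Function.iterate_succ_apply' _ _ _

lemma itot_bulletN {n k : ℕ} {t : PseudoType} {e : Expr} :
    ITot (k + n) (tbulletN n t) e ↔ ITot k t e := by
  induction n with
  | zero => exact Iff.rfl
  | succ m ih =>
    rw [tbulletN_succ]
    constructor
    · intro h
      exact ih.mp (itot_bullet_inv (k := k + m) h)
    · intro h
      exact (ITot.bullet rfl (ih.mpr h) : ITot (k + m + 1) _ _)

lemma itot_bulletN_low {n k : ℕ} {t : PseudoType} {e : Expr} (hk : k < n) :
    ITot k (tbulletN n t) e := by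
  induction n generalizing k with
  | zero => exact absurd hk (Nat.not_lt_zero _)
  | succ m ih =>
    cases k with
    | zero => exact ITot.zero _ _
    | succ k' =>
      rw [tbulletN_succ]
      exact ITot.bullet rfl (ih (Nat.succ_lt_succ_iff.mp hk))

end TotalInterp
/-! ### Semantic soundness of the constants -/

section Fundamental

lemma red_beta (X a : Expr) : Red (.app (.lam X) a) (subst0 X a) :=
  ⟨.hole, _, _, HeadRed.beta X a, rfl, rfl⟩

lemma red_fst_pair (a b : Expr) : Red (.app (.const .cfst) (mkPair a b)) a :=
  ⟨.hole, _, _, HeadRed.fst a b, rfl, rfl⟩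

lemma red_snd_pair (a b : Expr) : Red (.app (.const .csnd) (mkPair a b)) b :=
  ⟨.hole, _, _, HeadRed.snd a b, rfl, rfl⟩

lemma kappa_itot {c : Const} {t : PseudoType} (hkap : KappaTy c t) (k : ℕ) :
    ITot k t (.const c) := by
  cases k with
  | zero => exact ITot.zero _ _
  | succ k₀ =>
    cases hkap with
    | zero => exact ITot.base (Or.inl rfl) (wn_of_nf (nf_const _))
    | succ =>
      refine ITot.arrow rfl (wn_of_nf (nf_const _)) (fun j hj a ha => ?_)
      cases j with
      | zero => exact ITot.zero _ _
      | succ j₀ =>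
        have ha' : ITot (j₀ + 1) tnat a :=
          iguard_to_itot (j₀ + 1, tnat) guarded_tnat a (ha guarded_tnat)
        have hwa : WN a := itot_wn not_headIsBullet_tnat ha'
        obtain ⟨a', hstar, hnf⟩ := hwa
        exact ITot.base (Or.inl rfl)
          ⟨.app (.const .succ) a', redstar_succ_arg hstar, nf_succ_arg hnf⟩
    | @pair A B hA hB =>
      refine ITot.arrow rfl (wn_of_nf (nf_const _)) (fun j hj a ha => ?_)
      cases j with
      | zero => exact ITot.zero _ _
      | succ j₀ =>
        have haA : ITot (j₀ + 1) A a := iguard_to_itot (j₀ + 1, A) hA.2 a (ha hA.2)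
        refine ITot.arrow rfl (wn_of_nf (nf_app_pair a)) (fun i hi b hb => ?_)
        cases i with
        | zero => exact ITot.zero _ _
        | succ i₀ =>
          have hbB : ITot (i₀ + 1) B b := iguard_to_itot (i₀ + 1, B) hB.2 b (hb hB.2)
          refine ITot.prod rfl (wn_of_nf (nf_mkPair a b)) ?_ ?_
          · exact itot_expand (red_fst_pair a b) (itot_antitone haA _ hi)
          · exact itot_expand (red_snd_pair a b) hbB
    | @fst A B hA hB =>
      refine ITot.arrow rfl (wn_of_nf (nf_const _)) (fun j hj p hp => ?_)
      cases j with
      | zero => exact ITot.zero _ _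
      | succ j₀ =>
        have hgp : Guarded (tprod A B) := guarded_tprod hA.2 hB.2
        have hp' : ITot (j₀ + 1) (tprod A B) p := iguard_to_itot (j₀ + 1, tprod A B) hgp p (hp hgp)
        exact (itot_prod_inv hp').2.1
    | @snd A B hA hB =>
      refine ITot.arrow rfl (wn_of_nf (nf_const _)) (fun j hj p hp => ?_)
      cases j with
      | zero => exact ITot.zero _ _
      | succ j₀ =>
        have hgp : Guarded (tprod A B) := guarded_tprod hA.2 hB.2
        have hp' : ITot (j₀ + 1) (tprod A B) p := iguard_to_itot (j₀ + 1, tprod A B) hgp p (hp hgp)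
        exact (itot_prod_inv hp').2.2

/-! ### The fundamental lemma -/

/-- Semantic satisfaction of a typing context by a substitution. -/
def CtxOK (k : ℕ) (Γ : Ctx) (ρ : ℕ → Expr) : Prop :=
  ∀ x u, Γ x = some u → IsType u → ITot k u (ρ x)

lemma ctxok_antitone {k j : ℕ} {Γ : Ctx} {ρ : ℕ → Expr}
    (h : CtxOK k Γ ρ) (hj : j ≤ k) : CtxOK j Γ ρ :=
  fun x u hx hty => itot_antitone (h x u hx hty) j hj

theorem fundamental {Γ : Ctx} {e : Expr} {t : PseudoType} (h : Types Γ e t) :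
    ∀ k ρ, CtxOK k Γ ρ → ITot k t (substE ρ e) := by
  induction h with
  | ax hx hty =>
    intro k ρ hρ
    exact hρ _ _ hx hty
  | const hkap =>
    intro k ρ hρ
    exact kappa_itot hkap k
  | bulletI h ih =>
    intro k ρ hρ
    cases k with
    | zero => exact ITot.zero _ _
    | succ k₀ =>
      exact ITot.bullet rfl (ih k₀ ρ (ctxok_antitone hρ (Nat.le_succ _)))
  | @arrowI Γ' e' n A B h ih =>
    intro k ρ hρ
    rcases Nat.lt_or_ge k n with hlt | hge
    · exact itot_bulletN_low hlt
    · obtain ⟨m, rfl⟩ : ∃ m, k = m + n := ⟨k - n, (Nat.sub_add_cancel hge).symm⟩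
      refine itot_bulletN.mpr ?_
      cases m with
      | zero => exact ITot.zero _ _
      | succ m₀ =>
        refine ITot.arrow rfl (wn_of_nf (nf_lam _)) (fun j hj a ha => ?_)
        refine itot_expand (red_beta (substE (liftSub ρ) e') a) ?_
        rw [subst0_substE]
        refine itot_bulletN.mp (ih (j + n) (consSub a ρ) ?_)
        intro x u hx hty
        cases x with
        | zero =>
          injection hx with hx
          subst hx
          have hgA : Guarded A := guarded_tbulletN_down hty.2
          exact itot_bulletN.mpr (iguard_to_itot (j, A) hgA a (ha hgA))
        | succ x' =>
          exact itot_antitone (hρ x' u hx hty) _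
            (Nat.add_le_add_right (le_trans hj (le_refl _)) n)
  | @arrowE Γ' e₁ e₂ n A B h1 h2 ih1 ih2 =>
    intro k ρ hρ
    rcases Nat.lt_or_ge k n with hlt | hge
    · exact itot_bulletN_low hlt
    · obtain ⟨m, rfl⟩ : ∃ m, k = m + n := ⟨k - n, (Nat.sub_add_cancel hge).symm⟩
      refine itot_bulletN.mpr ?_
      cases m with
      | zero => exact ITot.zero _ _
      | succ m₀ =>
        have h1' := itot_bulletN.mp (ih1 (m₀ + 1 + n) ρ hρ)
        have h2' := itot_bulletN.mp (ih2 (m₀ + 1 + n) ρ hρ)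
        obtain ⟨hw, hap⟩ := itot_arrow_inv h1'
        exact hap (m₀ + 1) (le_refl _) _ (fun hgA => itot_to_iguard h2' hgA)

/-! ### Bullet spines -/

lemma binf_dest : binf.dest = ⟨TyHead.bullet, fun _ => binf⟩ := by
  refine (PFunctor.M.dest_corec _ _).trans ?_
  rfl

lemma tbulletN_bullet (n : ℕ) (u : PseudoType) :
    tbulletN n (tbullet u) = tbulletN (n + 1) u :=
  (Function.iterate_succ_apply _ _ _).symm

lemma headIsBullet_tbullet_eq {x : PseudoType} (h : headIsBullet x) :
    ∃ x', x = tbullet x' := by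
  rcases shape_cases x with ⟨m, rfl⟩ | rfl | ⟨A, B, rfl⟩ | ⟨A, B, rfl⟩ | ⟨u, rfl⟩
  · exact absurd h (not_headIsBullet_tvar m)
  · exact absurd h not_headIsBullet_tnat
  · exact absurd h (not_headIsBullet_tprod A B)
  · exact absurd h (not_headIsBullet_tarrow A B)
  · exact ⟨u, rfl⟩

lemma not_binf_spine {t : PseudoType} (hne : t ≠ binf) :
    ∃ n u, t = tbulletN n u ∧ ¬ headIsBullet u := by
  by_contra hcon
  push_neg at hcon
  apply hne
  refine PFunctor.M.bisim (fun a b => b = binf ∧ ∃ n, t = tbulletN n a) ?_ t binf ⟨rfl, 0, rfl⟩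
  rintro x y ⟨rfl, n, hx⟩
  obtain ⟨x', rfl⟩ := headIsBullet_tbullet_eq (hcon n x hx)
  refine ⟨TyHead.bullet, fun _ => x', fun _ => binf, rfl, binf_dest, ?_⟩
  intro i
  exact ⟨rfl, n + 1, by rw [hx, tbulletN_bullet]⟩

end Fundamental

/-- Normalisation of typable expressions: if `Γ ⊢ e : t` in
λ•→ and `t ≠ •^∞` then `e` reduces (in zero or more steps) to a (weak head)
normal form. -/
theorem normalisation (Γ : Ctx) (e : Expr) (t : PseudoType)
    (h : Types Γ e t) (hne : t ≠ binf) :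
    ∃ f, RedStar e f ∧ NormalForm f := by
  obtain ⟨n, u, rfl, hnb⟩ := not_binf_spine hne
  have hfund := fundamental h (n + 1) (fun x => .var x)
    (fun x u' _ hty => stuck_itot (n + 1, u') hty.2 _ (Stuck.var x))
  rw [substE_var] at hfund
  have h1 : ITot 1 u e := itot_bulletN.mp (by rw [Nat.add_comm] at hfund; exact hfund)
  exact itot_wn hnb h1

end LambdaBullet
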